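/- Let X₁, X₂, X₃ be independent with law U_T. For every r ∈ [2,∞), the probability that X₁ lies in both N^r(X₂) and N^r(X₃) equals P(X₁ ∈ N^r(X₂) and X₁ ∈ N^r(X₃)) = (15r⁴ − 45r² + 34)/(15r⁴). -/

import Mathlib

open MeasureTheory Real Set

noncomputable section

/-- The z-component of the cross product of two planar vectors. -/
def cross (u v : ℝ × ℝ) : ℝ := u.1 * v.2 - u.2 * v.1

/-- Barycentric coordinates of `x` with respect to the triangle with
vertices `a`, `b`, `c`. -/
def bary (a b c x : ℝ × ℝ) : Fin 3 → ℝ := fun i =>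
  if i = 1 then cross (x - a) (c - a) / cross (b - a) (c - a)
  else if i = 2 then cross (b - a) (x - a) / cross (b - a) (c - a)
  else 1 - cross (x - a) (c - a) / cross (b - a) (c - a)
    - cross (b - a) (x - a) / cross (b - a) (c - a)

/-- The closed triangle with vertices `a`, `b`, `c` (the set of points with
nonnegative barycentric coordinates). -/
def tri (a b c : ℝ × ℝ) : Set (ℝ × ℝ) := {x | ∀ i : Fin 3, 0 ≤ bary a b c x i}

/-- The least index maximizing the barycentric coordinates of `x`. -/
def jmax (a b c x : ℝ × ℝ) : Fin 3 :=
  if bary a b c x 1 ≤ bary a b c x 0 ∧ bary a b c x 2 ≤ bary a b c x 0 then 0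
  else if bary a b c x 2 ≤ bary a b c x 1 then 1 else 2

/-- The `r`-factor proximity region of `x` in the triangle with vertices `a`, `b`, `c`:
`N^r(x) = {z ∈ T : 1 − β_{j(x)}(z) ≤ r (1 − β_{j(x)}(x))}`. -/
def prox (a b c : ℝ × ℝ) (r : ℝ) (x : ℝ × ℝ) : Set (ℝ × ℝ) :=
  {z | z ∈ tri a b c ∧
    1 - bary a b c z (jmax a b c x) ≤ r * (1 - bary a b c x (jmax a b c x))}

/-- The uniform probability measure on `s ⊆ ℝ²` (normalized Lebesgue measure). -/
def unif (s : Set (ℝ × ℝ)) : Measure (ℝ × ℝ) := (volume s)⁻¹ • volume.restrict s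

def y1 : ℝ × ℝ := (0, 0)
def y2 : ℝ × ℝ := (1, 0)
def y3 : ℝ × ℝ := (1 / 2, Real.sqrt 3 / 2)

/-- The standard equilateral triangle. -/
def T : Set (ℝ × ℝ) := tri y1 y2 y3

/-- The `r`-factor proximity region in the standard triangle. -/
def N (r : ℝ) (x : ℝ × ℝ) : Set (ℝ × ℝ) := prox y1 y2 y3 r x

/-- The null arc probability `μ(r) = P(X₂ ∈ N^r(X₁))` for independent uniform
points in the standard triangle. -/
def mu (r : ℝ) : ℝ := (((unif T).prod (unif T)) {p | p.2 ∈ N r p.1}).toReal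

/-! ### Auxiliary development -/

lemma s3_pos : (0:ℝ) < Real.sqrt 3 := Real.sqrt_pos.mpr (by norm_num)
lemma s3_ne : (Real.sqrt 3 : ℝ) ≠ 0 := ne_of_gt s3_pos
lemma s3_sq : (Real.sqrt 3) ^ 2 = 3 := Real.sq_sqrt (by norm_num)

lemma crossq1 (x : ℝ × ℝ) :
    cross (x - y1) (y3 - y1) / cross (y2 - y1) (y3 - y1) = x.1 - x.2 / Real.sqrt 3 := by
  simp only [cross, y1, y2, y3]
  norm_num
  field_simp

lemma crossq2 (x : ℝ × ℝ) :
    cross (y2 - y1) (x - y1) / cross (y2 - y1) (y3 - y1) = 2 * x.2 / Real.sqrt 3 := by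
  simp only [cross, y1, y2, y3]
  norm_num
  field_simp

lemma bary_one (x : ℝ × ℝ) : bary y1 y2 y3 x 1 = x.1 - x.2 / Real.sqrt 3 := by
  rw [show bary y1 y2 y3 x 1 = cross (x - y1) (y3 - y1) / cross (y2 - y1) (y3 - y1) from rfl,
    crossq1]

lemma bary_two (x : ℝ × ℝ) : bary y1 y2 y3 x 2 = 2 * x.2 / Real.sqrt 3 := by
  rw [show bary y1 y2 y3 x 2 = cross (y2 - y1) (x - y1) / cross (y2 - y1) (y3 - y1) from rfl,
    crossq2]

lemma bary_zero (x : ℝ × ℝ) : bary y1 y2 y3 x 0 =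
    1 - (x.1 - x.2 / Real.sqrt 3) - (2 * x.2 / Real.sqrt 3) := by
  rw [show bary y1 y2 y3 x 0 = 1 - cross (x - y1) (y3 - y1) / cross (y2 - y1) (y3 - y1)
    - cross (y2 - y1) (x - y1) / cross (y2 - y1) (y3 - y1) from rfl, crossq1, crossq2]

lemma bary_sum (x : ℝ × ℝ) :
    bary y1 y2 y3 x 0 + bary y1 y2 y3 x 1 + bary y1 y2 y3 x 2 = 1 := by
  rw [bary_zero, bary_one, bary_two]; ring

lemma cont_bary (j : Fin 3) : Continuous (fun x => bary y1 y2 y3 x j) := by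
  fin_cases j
  · exact (show Continuous fun x : ℝ × ℝ =>
      1 - (x.1 - x.2 / Real.sqrt 3) - (2 * x.2 / Real.sqrt 3) by fun_prop).congr
      fun x => (bary_zero x).symm
  · exact (show Continuous fun x : ℝ × ℝ => x.1 - x.2 / Real.sqrt 3 by fun_prop).congr
      fun x => (bary_one x).symm
  · exact (show Continuous fun x : ℝ × ℝ => 2 * x.2 / Real.sqrt 3 by fun_prop).congr
      fun x => (bary_two x).symm

/-! ### Integration helpers -/

lemma integral_poly (a b c0 c1 c2 c3 c4 c5 : ℝ) :
    (∫ x in a..b, (c0 + c1*x + c2*x^2 + c3*x^3 + c4*x^4 + c5*x^5)) =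
      (c0*b + c1*b^2/2 + c2*b^3/3 + c3*b^4/4 + c4*b^5/5 + c5*b^6/6)
        - (c0*a + c1*a^2/2 + c2*a^3/3 + c3*a^4/4 + c4*a^5/5 + c5*a^6/6) := by
  have key : ∀ x ∈ Set.uIcc a b, HasDerivAt
      (fun y => c0*y^1/1 + c1*y^2/2 + c2*y^3/3 + c3*y^4/4 + c4*y^5/5 + c5*y^6/6)
      (c0 + c1*x + c2*x^2 + c3*x^3 + c4*x^4 + c5*x^5) x := by
    intro x _
    have H := (((((((hasDerivAt_pow 1 x).const_mul c0).div_const 1).add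
      (((hasDerivAt_pow 2 x).const_mul c1).div_const 2)).add
      (((hasDerivAt_pow 3 x).const_mul c2).div_const 3)).add
      (((hasDerivAt_pow 4 x).const_mul c3).div_const 4)).add
      (((hasDerivAt_pow 5 x).const_mul c4).div_const 5)).add
      (((hasDerivAt_pow 6 x).const_mul c5).div_const 6)
    refine H.congr_deriv ?_
    push_cast
    ring
  rw [intervalIntegral.integral_eq_sub_of_hasDerivAt key
    ((Continuous.intervalIntegrable (by fun_prop) a b))]
  ring

lemma integral_lin (a b c0 c1 : ℝ) :
    (∫ x in a..b, (c0 + c1 * x)) = c0*(b-a) + c1*(b^2 - a^2)/2 := by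
  rw [intervalIntegral.integral_congr
    (g := fun x => c0 + c1*x + 0*x^2 + 0*x^3 + 0*x^4 + 0*x^5) (fun x _ => by ring)]
  rw [integral_poly]; ring

lemma vol_prod (S : Set (ℝ × ℝ)) (hS : MeasurableSet S) :
    volume S = ∫⁻ u, volume {v | (u, v) ∈ S} := by
  rw [MeasureTheory.Measure.volume_eq_prod, Measure.prod_apply hS]
  rfl

lemma lint_Icc (a b : ℝ) (hab : a ≤ b) (f : ℝ → ℝ) (hf : Continuous f)
    (h0 : ∀ x ∈ Icc a b, 0 ≤ f x) :
    (∫⁻ u in Icc a b, ENNReal.ofReal (f u)) = ENNReal.ofReal (∫ u in a..b, f u) := by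
  rw [← ofReal_integral_eq_lintegral_ofReal (hf.integrableOn_Icc)
    ((ae_restrict_iff' measurableSet_Icc).mpr (ae_of_all _ h0))]
  rw [intervalIntegral.integral_of_le hab, ← integral_Icc_eq_integral_Ioc]

lemma lint_Ico (a b : ℝ) (hab : a ≤ b) (f : ℝ → ℝ) (hf : Continuous f)
    (h0 : ∀ x ∈ Icc a b, 0 ≤ f x) :
    (∫⁻ u in Ico a b, ENNReal.ofReal (f u)) = ENNReal.ofReal (∫ u in a..b, f u) := by
  rw [setLIntegral_congr MeasureTheory.Ico_ae_eq_Icc, lint_Icc a b hab f hf h0]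

lemma lint_Ioc (a b : ℝ) (hab : a ≤ b) (f : ℝ → ℝ) (hf : Continuous f)
    (h0 : ∀ x ∈ Icc a b, 0 ≤ f x) :
    (∫⁻ u in Ioc a b, ENNReal.ofReal (f u)) = ENNReal.ofReal (∫ u in a..b, f u) := by
  rw [setLIntegral_congr MeasureTheory.Ioc_ae_eq_Icc, lint_Icc a b hab f hf h0]

/-! ### The coordinate change -/

def L : (ℝ × ℝ) →ₗ[ℝ] (ℝ × ℝ) :=
  Matrix.toLin (Module.Basis.finTwoProd ℝ) (Module.Basis.finTwoProd ℝ)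
    !![1, -(Real.sqrt 3)⁻¹; 0, 2 / Real.sqrt 3]

lemma L_app (x : ℝ × ℝ) : L x = (x.1 - x.2 / Real.sqrt 3, 2 * x.2 / Real.sqrt 3) := by
  simp [L, Matrix.toLin_finTwoProd_apply]
  constructor <;> ring

lemma L_det : LinearMap.det L = 2 / Real.sqrt 3 := by
  rw [L, LinearMap.det_toLin]
  simp [Matrix.det_fin_two_of]

lemma L_det_ne : LinearMap.det L ≠ 0 := by
  rw [L_det]; positivity

lemma vol_preimage (s : Set (ℝ × ℝ)) :
    volume (L ⁻¹' s) = ENNReal.ofReal (Real.sqrt 3 / 2) * volume s := by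
  rw [Measure.addHaar_preimage_linearMap volume L_det_ne]
  congr 1
  rw [L_det, abs_of_nonneg (by positivity), inv_div]

lemma lintegral_comp_L (f : (ℝ × ℝ) → ENNReal) (hf : Measurable f) :
    (∫⁻ x, f (L x)) = ENNReal.ofReal (Real.sqrt 3 / 2) * ∫⁻ y, f y := by
  have hmap := Measure.map_linearMap_addHaar_eq_smul_addHaar (volume : Measure (ℝ × ℝ)) L_det_ne
  have h2 : (∫⁻ x, f (L x)) = ∫⁻ y, f y ∂(Measure.map L volume) := by
    rw [lintegral_map hf (LinearMap.continuous_of_finiteDimensional L).measurable]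
  rw [h2, hmap, lintegral_smul_measure, L_det, abs_of_nonneg (by positivity), inv_div, smul_eq_mul]

/-! ### Areas in barycentric coordinates -/

def Dset : Set (ℝ × ℝ) := {p | 0 ≤ p.1 ∧ 0 ≤ p.2 ∧ p.1 + p.2 ≤ 1}

lemma measurableSet_Dset : MeasurableSet Dset := by
  unfold Dset
  apply MeasurableSet.inter
  · exact measurableSet_le measurable_const measurable_fst
  apply MeasurableSet.inter
  · exact measurableSet_le measurable_const measurable_snd
  · exact measurableSet_le (measurable_fst.add measurable_snd) measurable_const

lemma vol_Dset : volume Dset = ENNReal.ofReal (1/2) := by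
  rw [vol_prod _ measurableSet_Dset]
  calc (∫⁻ u, volume {v | (u, v) ∈ Dset})
      = ∫⁻ u, (Icc (0:ℝ) 1).indicator (fun u => ENNReal.ofReal (1 + (-1) * u)) u := by
        apply lintegral_congr
        intro u
        by_cases hu : u ∈ Icc (0:ℝ) 1
        · rw [indicator_of_mem hu]
          have : {v | (u, v) ∈ Dset} = Icc 0 (1 - u) := by
            ext v
            simp only [Dset, mem_setOf_eq, mem_Icc]
            constructor
            · rintro ⟨_, h2, h3⟩; exact ⟨h2, by linarith⟩
            · rintro ⟨h2, h3⟩; exact ⟨hu.1, h2, by linarith⟩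
          rw [this, Real.volume_Icc]
          congr 1
          ring
        · rw [indicator_of_notMem hu]
          have : {v | (u, v) ∈ Dset} = (∅ : Set ℝ) := by
            ext v
            simp only [Dset, mem_setOf_eq, mem_empty_iff_false, iff_false]
            rintro ⟨h1, h2, h3⟩
            simp only [mem_Icc, not_and_or, not_le] at hu
            rcases hu with h | h <;> linarith
          rw [this]
          simp
    _ = ENNReal.ofReal (∫ u in (0:ℝ)..1, (1 + (-1) * u)) := by
        rw [lintegral_indicator measurableSet_Icc]
        exact lint_Icc 0 1 (by norm_num) _ (by fun_prop)
          (fun x hx => by simp only [mem_Icc] at hx; linarith [hx.2])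
    _ = ENNReal.ofReal (1/2) := by rw [integral_lin]; norm_num

def D0 (c : ℝ) : Set (ℝ × ℝ) := {p | (0 ≤ p.1 ∧ 0 ≤ p.2 ∧ p.1 + p.2 ≤ 1) ∧ c < 1 - p.1 - p.2}
def D1 (c : ℝ) : Set (ℝ × ℝ) := {p | (0 ≤ p.1 ∧ 0 ≤ p.2 ∧ p.1 + p.2 ≤ 1) ∧ c < p.1}
def D2 (c : ℝ) : Set (ℝ × ℝ) := {p | (0 ≤ p.1 ∧ 0 ≤ p.2 ∧ p.1 + p.2 ≤ 1) ∧ c < p.2}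

lemma measurableSet_D0 (c : ℝ) : MeasurableSet (D0 c) := by
  have : D0 c = Dset ∩ {p : ℝ × ℝ | c < 1 - p.1 - p.2} := rfl
  rw [this]
  exact measurableSet_Dset.inter
    (measurableSet_lt measurable_const (by fun_prop))

lemma measurableSet_D1 (c : ℝ) : MeasurableSet (D1 c) := by
  have : D1 c = Dset ∩ {p : ℝ × ℝ | c < p.1} := rfl
  rw [this]
  exact measurableSet_Dset.inter (measurableSet_lt measurable_const measurable_fst)

lemma measurableSet_D2 (c : ℝ) : MeasurableSet (D2 c) := by
  have : D2 c = Dset ∩ {p : ℝ × ℝ | c < p.2} := rfl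
  rw [this]
  exact measurableSet_Dset.inter (measurableSet_lt measurable_const measurable_snd)

lemma vol_D0 (c : ℝ) (hc : 0 ≤ c) (hc1 : c ≤ 1) :
    volume (D0 c) = ENNReal.ofReal ((1 - c)^2 / 2) := by
  rw [vol_prod _ (measurableSet_D0 c)]
  calc (∫⁻ u, volume {v | (u, v) ∈ D0 c})
      = ∫⁻ u, (Ico (0:ℝ) (1-c)).indicator (fun u => ENNReal.ofReal ((1-c) + (-1) * u)) u := by
        apply lintegral_congr
        intro u
        by_cases hu : u ∈ Ico (0:ℝ) (1-c)
        · rw [indicator_of_mem hu]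
          obtain ⟨hu0, hu1⟩ := hu
          have : {v | (u, v) ∈ D0 c} = Ico 0 (1 - c - u) := by
            ext v
            simp only [D0, mem_setOf_eq, mem_Ico]
            constructor
            · rintro ⟨⟨_, h2, _⟩, h4⟩; exact ⟨h2, by linarith⟩
            · rintro ⟨h2, h3⟩; exact ⟨⟨hu0, h2, by linarith⟩, by linarith⟩
          rw [this, Real.volume_Ico]
          congr 1
          ring
        · rw [indicator_of_notMem hu]
          have : {v | (u, v) ∈ D0 c} = (∅ : Set ℝ) := by
            ext v
            simp only [D0, mem_setOf_eq, mem_empty_iff_false, iff_false]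
            rintro ⟨⟨h1, h2, h3⟩, h4⟩
            simp only [mem_Ico, not_and_or, not_le, not_lt] at hu
            rcases hu with h | h <;> linarith
          rw [this]
          simp
    _ = ENNReal.ofReal (∫ u in (0:ℝ)..(1-c), ((1-c) + (-1) * u)) := by
        rw [lintegral_indicator measurableSet_Ico]
        exact lint_Ico 0 (1-c) (by linarith) _ (by fun_prop)
          (fun x hx => by simp only [mem_Icc] at hx; linarith [hx.2])
    _ = ENNReal.ofReal ((1 - c)^2 / 2) := by rw [integral_lin]; congr 1; ring

lemma vol_D1 (c : ℝ) (hc : 0 ≤ c) (hc1 : c ≤ 1) :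
    volume (D1 c) = ENNReal.ofReal ((1 - c)^2 / 2) := by
  rw [vol_prod _ (measurableSet_D1 c)]
  calc (∫⁻ u, volume {v | (u, v) ∈ D1 c})
      = ∫⁻ u, (Ioc c 1).indicator (fun u => ENNReal.ofReal (1 + (-1) * u)) u := by
        apply lintegral_congr
        intro u
        by_cases hu : u ∈ Ioc c 1
        · rw [indicator_of_mem hu]
          obtain ⟨hu0, hu1⟩ := hu
          have : {v | (u, v) ∈ D1 c} = Icc 0 (1 - u) := by
            ext v
            simp only [D1, mem_setOf_eq, mem_Icc]
            constructor
            · rintro ⟨⟨_, h2, h3⟩, _⟩; exact ⟨h2, by linarith⟩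
            · rintro ⟨h2, h3⟩; exact ⟨⟨by linarith, h2, by linarith⟩, hu0⟩
          rw [this, Real.volume_Icc]
          congr 1
          ring
        · rw [indicator_of_notMem hu]
          have : {v | (u, v) ∈ D1 c} = (∅ : Set ℝ) := by
            ext v
            simp only [D1, mem_setOf_eq, mem_empty_iff_false, iff_false]
            rintro ⟨⟨h1, h2, h3⟩, h4⟩
            simp only [mem_Ioc, not_and_or, not_le, not_lt] at hu
            rcases hu with h | h <;> linarith
          rw [this]
          simp
    _ = ENNReal.ofReal (∫ u in c..1, (1 + (-1) * u)) := by
        rw [lintegral_indicator measurableSet_Ioc]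
        exact lint_Ioc c 1 (by linarith) _ (by fun_prop)
          (fun x hx => by simp only [mem_Icc] at hx; linarith [hx.2])
    _ = ENNReal.ofReal ((1 - c)^2 / 2) := by rw [integral_lin]; congr 1; ring

lemma vol_D2 (c : ℝ) (hc : 0 ≤ c) (hc1 : c ≤ 1) :
    volume (D2 c) = ENNReal.ofReal ((1 - c)^2 / 2) := by
  rw [vol_prod _ (measurableSet_D2 c)]
  calc (∫⁻ u, volume {v | (u, v) ∈ D2 c})
      = ∫⁻ u, (Ico (0:ℝ) (1-c)).indicator (fun u => ENNReal.ofReal ((1-c) + (-1) * u)) u := by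
        apply lintegral_congr
        intro u
        by_cases hu : u ∈ Ico (0:ℝ) (1-c)
        · rw [indicator_of_mem hu]
          obtain ⟨hu0, hu1⟩ := hu
          have : {v | (u, v) ∈ D2 c} = Ioc c (1 - u) := by
            ext v
            simp only [D2, mem_setOf_eq, mem_Ioc]
            constructor
            · rintro ⟨⟨_, _, h3⟩, h4⟩; exact ⟨h4, by linarith⟩
            · rintro ⟨h2, h3⟩; exact ⟨⟨hu0, by linarith, by linarith⟩, h2⟩
          rw [this, Real.volume_Ioc]
          congr 1
          ring
        · rw [indicator_of_notMem hu]
          have : {v | (u, v) ∈ D2 c} = (∅ : Set ℝ) := by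
            ext v
            simp only [D2, mem_setOf_eq, mem_empty_iff_false, iff_false]
            rintro ⟨⟨h1, h2, h3⟩, h4⟩
            simp only [mem_Ico, not_and_or, not_le, not_lt] at hu
            rcases hu with h | h <;> linarith
          rw [this]
          simp
    _ = ENNReal.ofReal (∫ u in (0:ℝ)..(1-c), ((1-c) + (-1) * u)) := by
        rw [lintegral_indicator measurableSet_Ico]
        exact lint_Ico 0 (1-c) (by linarith) _ (by fun_prop)
          (fun x hx => by simp only [mem_Icc] at hx; linarith [hx.2])
    _ = ENNReal.ofReal ((1 - c)^2 / 2) := by rw [integral_lin]; congr 1; ring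

/-! ### The triangle T -/

lemma T_eq : T = L ⁻¹' Dset := by
  ext x
  constructor
  · intro h
    have h0 := h 0; have h1 := h 1; have h2 := h 2
    rw [bary_zero] at h0; rw [bary_one] at h1; rw [bary_two] at h2
    simp only [mem_preimage, L_app, Dset, mem_setOf_eq]
    exact ⟨h1, h2, by linarith⟩
  · intro h
    simp only [mem_preimage, L_app x, Dset, mem_setOf_eq] at h
    have g0 : 0 ≤ bary y1 y2 y3 x 0 := by rw [bary_zero]; linarith [h.1, h.2.1, h.2.2]
    have g1 : 0 ≤ bary y1 y2 y3 x 1 := by rw [bary_one]; exact h.1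
    have g2 : 0 ≤ bary y1 y2 y3 x 2 := by rw [bary_two]; exact h.2.1
    intro i
    fin_cases i
    · exact g0
    · exact g1
    · exact g2

lemma measurableSet_T : MeasurableSet T := by
  rw [T_eq]
  exact measurableSet_Dset.preimage (LinearMap.continuous_of_finiteDimensional L).measurable

lemma volume_T : volume T = ENNReal.ofReal (Real.sqrt 3 / 4) := by
  rw [T_eq, vol_preimage, vol_Dset, ← ENNReal.ofReal_mul (by positivity)]
  congr 1
  ring

lemma measurable_jmax : Measurable (fun z => jmax y1 y2 y3 z) := by
  unfold jmax
  refine Measurable.ite ?_ measurable_const (Measurable.ite ?_ measurable_const measurable_const)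
  · exact (measurableSet_le ((cont_bary 1).measurable) ((cont_bary 0).measurable)).inter
      (measurableSet_le ((cont_bary 2).measurable) ((cont_bary 0).measurable))
  · exact measurableSet_le ((cont_bary 2).measurable) ((cont_bary 1).measurable)

lemma jmax_eq_of_half (z : ℝ × ℝ) (hz : z ∈ T) (j : Fin 3)
    (h : 1/2 < bary y1 y2 y3 z j) : jmax y1 y2 y3 z = j := by
  have h0 : 0 ≤ bary y1 y2 y3 z 0 := hz 0
  have h1 : 0 ≤ bary y1 y2 y3 z 1 := hz 1
  have h2 : 0 ≤ bary y1 y2 y3 z 2 := hz 2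
  have hs := bary_sum z
  unfold jmax
  fin_cases j
  · have h' : 1/2 < bary y1 y2 y3 z 0 := h
    rw [if_pos ⟨by linarith, by linarith⟩]; rfl
  · have h' : 1/2 < bary y1 y2 y3 z 1 := h
    rw [if_neg (by rintro ⟨ha, hb⟩; linarith), if_pos (by linarith)]; rfl
  · have h' : 1/2 < bary y1 y2 y3 z 2 := h
    rw [if_neg (by rintro ⟨ha, hb⟩; linarith), if_neg (by intro hb; linarith)]; rfl

lemma mem_T_iff (z : ℝ × ℝ) : z ∈ T ↔ (0 ≤ z.1 - z.2 / Real.sqrt 3 ∧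
    0 ≤ 2 * z.2 / Real.sqrt 3 ∧ (z.1 - z.2 / Real.sqrt 3) + 2 * z.2 / Real.sqrt 3 ≤ 1) := by
  rw [T_eq]
  simp only [mem_preimage, L_app, Dset, mem_setOf_eq]

lemma S_preimage0 (c : ℝ) : T ∩ {z | c < bary y1 y2 y3 z 0} = L ⁻¹' D0 c := by
  ext z
  simp only [mem_inter_iff, mem_setOf_eq, mem_preimage, L_app, D0, mem_T_iff, bary_zero]

lemma S_preimage1 (c : ℝ) : T ∩ {z | c < bary y1 y2 y3 z 1} = L ⁻¹' D1 c := by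
  ext z
  simp only [mem_inter_iff, mem_setOf_eq, mem_preimage, L_app, D1, mem_T_iff, bary_one]

lemma S_preimage2 (c : ℝ) : T ∩ {z | c < bary y1 y2 y3 z 2} = L ⁻¹' D2 c := by
  ext z
  simp only [mem_inter_iff, mem_setOf_eq, mem_preimage, L_app, D2, mem_T_iff, bary_two]

set_option maxHeartbeats 1000000 in
lemma vol_Gamma (r : ℝ) (hr : 2 ≤ r) (x0 : ℝ × ℝ) (hx0 : x0 ∈ T) :
    volume ({z | x0 ∈ N r z} ∩ T) = ENNReal.ofReal (Real.sqrt 3 / 4 *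
      (1 - ((1 - bary y1 y2 y3 x0 0)^2 + (1 - bary y1 y2 y3 x0 1)^2
        + (1 - bary y1 y2 y3 x0 2)^2) / r^2)) := by
  have hr0 : (0:ℝ) < r := by linarith
  have hb0 : 0 ≤ bary y1 y2 y3 x0 0 := hx0 0
  have hb1 : 0 ≤ bary y1 y2 y3 x0 1 := hx0 1
  have hb2 : 0 ≤ bary y1 y2 y3 x0 2 := hx0 2
  have hbs := bary_sum x0
  set cc : Fin 3 → ℝ := fun j => 1 - (1 - bary y1 y2 y3 x0 j) / r with hcc
  have e0 : (1 - bary y1 y2 y3 x0 0) / r ≤ 1/2 := by rw [div_le_iff₀ hr0]; nlinarith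
  have e1 : (1 - bary y1 y2 y3 x0 1) / r ≤ 1/2 := by rw [div_le_iff₀ hr0]; nlinarith
  have e2 : (1 - bary y1 y2 y3 x0 2) / r ≤ 1/2 := by rw [div_le_iff₀ hr0]; nlinarith
  have f0 : 0 ≤ (1 - bary y1 y2 y3 x0 0) / r := div_nonneg (by linarith) hr0.le
  have f1 : 0 ≤ (1 - bary y1 y2 y3 x0 1) / r := div_nonneg (by linarith) hr0.le
  have f2 : 0 ≤ (1 - bary y1 y2 y3 x0 2) / r := div_nonneg (by linarith) hr0.le
  have hch0 : 1/2 ≤ cc 0 := by simp only [hcc]; linarith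
  have hch1 : 1/2 ≤ cc 1 := by simp only [hcc]; linarith
  have hch2 : 1/2 ≤ cc 2 := by simp only [hcc]; linarith
  have hcu0 : cc 0 ≤ 1 := by simp only [hcc]; linarith
  have hcu1 : cc 1 ≤ 1 := by simp only [hcc]; linarith
  have hcu2 : cc 2 ≤ 1 := by simp only [hcc]; linarith
  have hccb : ∀ j : Fin 3, 1/2 ≤ cc j ∧ cc j ≤ 1 := by
    intro j
    fin_cases j
    · exact ⟨hch0, hcu0⟩
    · exact ⟨hch1, hcu1⟩
    · exact ⟨hch2, hcu2⟩
  set R : Fin 3 → Set (ℝ × ℝ) := fun j => T ∩ {z | jmax y1 y2 y3 z = j} with hRdef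
  set A : Fin 3 → Set (ℝ × ℝ) := fun j => R j ∩ {z | bary y1 y2 y3 z j ≤ cc j} with hAdef
  set S : Fin 3 → Set (ℝ × ℝ) := fun j => T ∩ {z | cc j < bary y1 y2 y3 z j} with hSdef
  have hRmeas : ∀ j, MeasurableSet (R j) := fun j =>
    measurableSet_T.inter (measurable_jmax (measurableSet_singleton j))
  have hAmeas : ∀ j, MeasurableSet (A j) := fun j =>
    (hRmeas j).inter (measurableSet_le (cont_bary j).measurable measurable_const)
  have hSmeas : ∀ j, MeasurableSet (S j) := fun j =>
    measurableSet_T.inter (measurableSet_lt measurable_const (cont_bary j).measurable)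
  -- decomposition of the Γ₁ region
  have hGamma : {z | x0 ∈ N r z} ∩ T = ⋃ j, A j := by
    ext z
    simp only [mem_inter_iff, mem_setOf_eq, mem_iUnion, N, prox, hAdef, hRdef]
    constructor
    · rintro ⟨⟨htri, hineq⟩, hzT⟩
      refine ⟨jmax y1 y2 y3 z, ⟨⟨hzT, rfl⟩, ?_⟩⟩
      have := (div_le_iff₀ hr0).mpr (by linarith :
        1 - bary y1 y2 y3 x0 (jmax y1 y2 y3 z) ≤ (1 - bary y1 y2 y3 z (jmax y1 y2 y3 z)) * r)
      simp only [hcc]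
      linarith
    · rintro ⟨j, ⟨⟨hzT, hj⟩, hle⟩⟩
      refine ⟨⟨(hx0 : x0 ∈ tri y1 y2 y3), ?_⟩, hzT⟩
      rw [hj]
      simp only [hcc] at hle
      have := (div_le_iff₀ hr0).mp (by linarith :
        (1 - bary y1 y2 y3 x0 j) / r ≤ 1 - bary y1 y2 y3 z j)
      linarith
  -- R j splits into A j and S j
  have hRA : ∀ j, R j = A j ∪ S j := by
    intro j
    ext z
    simp only [hAdef, hSdef, hRdef, mem_union, mem_inter_iff, mem_setOf_eq]
    constructor
    · rintro ⟨hzT, hj⟩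
      rcases le_or_gt (bary y1 y2 y3 z j) (cc j) with h | h
      · exact Or.inl ⟨⟨hzT, hj⟩, h⟩
      · exact Or.inr ⟨hzT, h⟩
    · rintro (⟨⟨hzT, hj⟩, _⟩ | ⟨hzT, hlt⟩)
      · exact ⟨hzT, hj⟩
      · exact ⟨hzT, jmax_eq_of_half z hzT j (lt_of_le_of_lt (hccb j).1 hlt)⟩
  have hvolR : ∀ j, volume (R j) = volume (A j) + volume (S j) := by
    intro j
    rw [hRA j]
    apply measure_union _ (hSmeas j)
    rw [disjoint_left]
    rintro z ⟨_, hle⟩ ⟨_, hlt⟩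
    have h1 : bary y1 y2 y3 z j ≤ cc j := hle
    have h2 : cc j < bary y1 y2 y3 z j := hlt
    linarith
  have hTunion : T = ⋃ j, R j := by
    ext z
    simp only [mem_iUnion, hRdef, mem_inter_iff, mem_setOf_eq]
    constructor
    · intro hz; exact ⟨jmax y1 y2 y3 z, hz, rfl⟩
    · rintro ⟨j, hz, _⟩; exact hz
  have hRdisj : Pairwise (Function.onFun Disjoint R) := by
    intro i j hij
    simp only [Function.onFun, hRdef]
    rw [disjoint_left]
    rintro z ⟨_, hi⟩ ⟨_, hj⟩
    exact hij (hi ▸ hj ▸ rfl)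
  have hAdisj : Pairwise (Function.onFun Disjoint A) := by
    intro i j hij
    have := hRdisj hij
    simp only [Function.onFun, hAdef] at *
    exact (this.mono inter_subset_left inter_subset_left)
  have hvolT : volume T = ∑ j : Fin 3, volume (R j) := by
    conv_lhs => rw [hTunion]
    rw [measure_iUnion hRdisj hRmeas, tsum_fintype]
  have hvolU : volume (⋃ j, A j) = ∑ j : Fin 3, volume (A j) := by
    rw [measure_iUnion hAdisj hAmeas, tsum_fintype]
  -- volumes of the S j
  have hcl0 : (0:ℝ) ≤ cc 0 := by simp only [hcc]; linarith
  have hcl1 : (0:ℝ) ≤ cc 1 := by simp only [hcc]; linarith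
  have hcl2 : (0:ℝ) ≤ cc 2 := by simp only [hcc]; linarith
  have hS0 : volume (S 0) = ENNReal.ofReal (Real.sqrt 3 / 2 * ((1 - cc 0)^2 / 2)) := by
    rw [hSdef]
    simp only
    rw [S_preimage0, vol_preimage, vol_D0 (cc 0) hcl0 hcu0,
      ← ENNReal.ofReal_mul (by positivity)]
  have hS1 : volume (S 1) = ENNReal.ofReal (Real.sqrt 3 / 2 * ((1 - cc 1)^2 / 2)) := by
    rw [hSdef]
    simp only
    rw [S_preimage1, vol_preimage, vol_D1 (cc 1) hcl1 hcu1,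
      ← ENNReal.ofReal_mul (by positivity)]
  have hS2 : volume (S 2) = ENNReal.ofReal (Real.sqrt 3 / 2 * ((1 - cc 2)^2 / 2)) := by
    rw [hSdef]
    simp only
    rw [S_preimage2, vol_preimage, vol_D2 (cc 2) hcl2 hcu2,
      ← ENNReal.ofReal_mul (by positivity)]
  -- accounting
  have key : volume (⋃ j, A j) + (volume (S 0) + volume (S 1) + volume (S 2))
      = ENNReal.ofReal (Real.sqrt 3 / 4) := by
    rw [hvolU, ← volume_T, hvolT, Fin.sum_univ_three, Fin.sum_univ_three,
      hvolR 0, hvolR 1, hvolR 2]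
    ring
  have htgt_nonneg : 0 ≤ Real.sqrt 3 / 4 *
      (1 - ((1 - bary y1 y2 y3 x0 0)^2 + (1 - bary y1 y2 y3 x0 1)^2
        + (1 - bary y1 y2 y3 x0 2)^2) / r^2) := by
    have h4 : (4:ℝ) ≤ r^2 := by nlinarith
    have hsum : (1 - bary y1 y2 y3 x0 0)^2 + (1 - bary y1 y2 y3 x0 1)^2
        + (1 - bary y1 y2 y3 x0 2)^2 ≤ 3 := by nlinarith
    have : ((1 - bary y1 y2 y3 x0 0)^2 + (1 - bary y1 y2 y3 x0 1)^2
        + (1 - bary y1 y2 y3 x0 2)^2) / r^2 ≤ 3/4 := by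
      rw [div_le_iff₀ (by positivity)]
      nlinarith [sq_nonneg (1 - bary y1 y2 y3 x0 0), sq_nonneg (1 - bary y1 y2 y3 x0 1),
        sq_nonneg (1 - bary y1 y2 y3 x0 2)]
    have h4' : 0 ≤ 1 - ((1 - bary y1 y2 y3 x0 0)^2 + (1 - bary y1 y2 y3 x0 1)^2
        + (1 - bary y1 y2 y3 x0 2)^2) / r^2 := by linarith
    exact mul_nonneg (by positivity) h4'
  have key2 : ENNReal.ofReal (Real.sqrt 3 / 4 *
      (1 - ((1 - bary y1 y2 y3 x0 0)^2 + (1 - bary y1 y2 y3 x0 1)^2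
        + (1 - bary y1 y2 y3 x0 2)^2) / r^2))
      + (volume (S 0) + volume (S 1) + volume (S 2))
      = ENNReal.ofReal (Real.sqrt 3 / 4) := by
    rw [hS0, hS1, hS2, ← ENNReal.ofReal_add (by positivity) (by positivity),
      ← ENNReal.ofReal_add (by positivity) (by positivity),
      ← ENNReal.ofReal_add htgt_nonneg (by positivity)]
    congr 1
    simp only [hcc]
    field_simp
    ring
  have hfin : volume (S 0) + volume (S 1) + volume (S 2) ≠ ⊤ := by
    rw [hS0, hS1, hS2]
    simp [ENNReal.ofReal_ne_top]
  rw [hGamma]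
  exact WithTop.add_right_cancel hfin (key.trans key2.symm)

/-! ### The polynomial integral over the standard triangle -/

def Ppoly (k u : ℝ) : ℝ :=
  (1 + (-10/3)*k + (14/5)*k^2) + ((-1) + 6*k + (-22/3)*k^2)*u
    + ((-6)*k + 12*k^2)*u^2 + ((10/3)*k + (-12)*k^2)*u^3
    + ((22/3)*k^2)*u^4 + ((-14/5)*k^2)*u^5

lemma inner_int (k u : ℝ) :
    (∫ v in (0:ℝ)..(1-u), (1 - 2*k*(u^2 + v^2 + u*v - u - v + 1))^2) = Ppoly k u := by
  rw [intervalIntegral.integral_congr (g := fun v =>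
      (1 + (-4)*k + 4*k^2 + 4*u*k + (-8)*u*k^2 + (-4)*u^2*k + 12*u^2*k^2
        + (-8)*u^3*k^2 + 4*u^4*k^2)
      + (4*k + (-8)*k^2 + (-4)*u*k + 16*u*k^2 + (-16)*u^2*k^2 + 8*u^3*k^2)*v
      + ((-4)*k + 12*k^2 + (-16)*u*k^2 + 12*u^2*k^2)*v^2
      + ((-8)*k^2 + 8*u*k^2)*v^3 + (4*k^2)*v^4 + 0*v^5) (fun v _ => by ring)]
  rw [integral_poly]
  unfold Ppoly
  ring

lemma outer_int (k : ℝ) :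
    (∫ u in (0:ℝ)..1, Ppoly k u) = 1/2 - 3/2*k + 17/15*k^2 := by
  simp only [Ppoly]
  rw [integral_poly]
  ring

lemma lint_Dset (k : ℝ) :
    (∫⁻ y in Dset, ENNReal.ofReal ((1 - 2*k*(y.1^2 + y.2^2 + y.1*y.2 - y.1 - y.2 + 1))^2))
      = ENNReal.ofReal (1/2 - 3/2*k + 17/15*k^2) := by
  have hmeas : Measurable (Dset.indicator (fun y : ℝ × ℝ =>
      ENNReal.ofReal ((1 - 2*k*(y.1^2 + y.2^2 + y.1*y.2 - y.1 - y.2 + 1))^2))) := by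
    apply Measurable.indicator _ measurableSet_Dset
    exact ENNReal.measurable_ofReal.comp (by fun_prop)
  rw [← lintegral_indicator measurableSet_Dset, MeasureTheory.Measure.volume_eq_prod,
    lintegral_prod _ hmeas.aemeasurable]
  calc (∫⁻ u, ∫⁻ v, (Dset.indicator (fun y : ℝ × ℝ =>
      ENNReal.ofReal ((1 - 2*k*(y.1^2 + y.2^2 + y.1*y.2 - y.1 - y.2 + 1))^2)) (u, v)))
      = ∫⁻ u, (Icc (0:ℝ) 1).indicator (fun u => ENNReal.ofReal
          (∫ v in (0:ℝ)..(1-u), (1 - 2*k*(u^2 + v^2 + u*v - u - v + 1))^2)) u := by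
        apply lintegral_congr
        intro u
        by_cases hu : u ∈ Icc (0:ℝ) 1
        · rw [indicator_of_mem hu]
          calc (∫⁻ v, (Dset.indicator (fun y : ℝ × ℝ =>
              ENNReal.ofReal ((1 - 2*k*(y.1^2 + y.2^2 + y.1*y.2 - y.1 - y.2 + 1))^2)) (u, v)))
              = ∫⁻ v, (Icc (0:ℝ) (1-u)).indicator (fun v =>
                  ENNReal.ofReal ((1 - 2*k*(u^2 + v^2 + u*v - u - v + 1))^2)) v := by
                apply lintegral_congr
                intro v
                by_cases hv : v ∈ Icc (0:ℝ) (1-u)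
                · rw [indicator_of_mem hv, indicator_of_mem (show (u, v) ∈ Dset from
                    ⟨hu.1, hv.1, by have := hv.2; simp only; linarith⟩)]
                · rw [indicator_of_notMem hv, indicator_of_notMem (show (u, v) ∉ Dset from by
                    intro hm
                    obtain ⟨h1, h2, h3⟩ := hm
                    simp only [mem_Icc, not_and_or, not_le] at hv
                    rcases hv with h | h
                    · exact absurd h2 (by simpa using not_le.mpr h)
                    · simp only at h1 h2 h3
                      linarith)]
            _ = ENNReal.ofReal (∫ v in (0:ℝ)..(1-u),
                  (1 - 2*k*(u^2 + v^2 + u*v - u - v + 1))^2) := by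
                rw [lintegral_indicator measurableSet_Icc]
                exact lint_Icc 0 (1-u) (by linarith [hu.2]) _ (by fun_prop)
                  (fun v _ => sq_nonneg _)
        · rw [indicator_of_notMem hu]
          have hz : ∀ v : ℝ, (Dset.indicator (fun y : ℝ × ℝ =>
              ENNReal.ofReal ((1 - 2*k*(y.1^2 + y.2^2 + y.1*y.2 - y.1 - y.2 + 1))^2)) (u, v)) = 0 := by
            intro v
            apply indicator_of_notMem
            intro hm
            obtain ⟨h1, h2, h3⟩ := hm
            simp only [mem_Icc, not_and_or, not_le] at hu
            simp only at h1 h2 h3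
            rcases hu with h | h <;> linarith
          simp only [hz, lintegral_zero]
    _ = ∫⁻ u, (Icc (0:ℝ) 1).indicator (fun u => ENNReal.ofReal (Ppoly k u)) u := by
        apply lintegral_congr
        intro u
        by_cases hu : u ∈ Icc (0:ℝ) 1
        · rw [indicator_of_mem hu, indicator_of_mem hu, inner_int]
        · rw [indicator_of_notMem hu, indicator_of_notMem hu]
    _ = ENNReal.ofReal (1/2 - 3/2*k + 17/15*k^2) := by
        rw [lintegral_indicator measurableSet_Icc,
          lint_Icc 0 1 (by norm_num) _ (by unfold Ppoly; fun_prop)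
            (fun u hu => by
              rw [← inner_int]
              exact intervalIntegral.integral_nonneg (by linarith [hu.2])
                (fun v _ => sq_nonneg _)),
          outer_int]

/-! ### The uniform measure on T -/

lemma volT_ne_zero : volume T ≠ 0 := by
  rw [volume_T]
  simp only [ne_eq, ENNReal.ofReal_eq_zero, not_le]
  positivity

lemma volT_ne_top : volume T ≠ ⊤ := by
  rw [volume_T]; exact ENNReal.ofReal_ne_top

instance : IsProbabilityMeasure (unif T) := by
  constructor
  rw [unif, Measure.smul_apply, Measure.restrict_apply MeasurableSet.univ, univ_inter,
    smul_eq_mul, ENNReal.inv_mul_cancel volT_ne_zero volT_ne_top]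

/-! ### Measurability of the proximity relation -/

lemma measurableSet_W (r : ℝ) :
    MeasurableSet {q : (ℝ × ℝ) × (ℝ × ℝ) | q.1 ∈ N r q.2} := by
  have hW : {q : (ℝ × ℝ) × (ℝ × ℝ) | q.1 ∈ N r q.2} =
      {q : (ℝ × ℝ) × (ℝ × ℝ) | q.1 ∈ T} ∩ ⋃ j : Fin 3,
        ({q : (ℝ × ℝ) × (ℝ × ℝ) | jmax y1 y2 y3 q.2 = j} ∩
          {q : (ℝ × ℝ) × (ℝ × ℝ) |
            1 - bary y1 y2 y3 q.1 j ≤ r * (1 - bary y1 y2 y3 q.2 j)}) := by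
    ext q
    simp only [mem_inter_iff, mem_setOf_eq, mem_iUnion, N, prox]
    constructor
    · rintro ⟨htri, hineq⟩
      exact ⟨htri, ⟨jmax y1 y2 y3 q.2, rfl, hineq⟩⟩
    · rintro ⟨hT, ⟨j, hj, hle⟩⟩
      refine ⟨hT, ?_⟩
      rw [hj]
      exact hle
  rw [hW]
  apply MeasurableSet.inter
  · exact measurable_fst measurableSet_T
  apply MeasurableSet.iUnion
  intro j
  apply MeasurableSet.inter
  · exact (measurable_jmax.comp measurable_snd) (measurableSet_singleton j)
  · exact measurableSet_le
      ((continuous_const.sub ((cont_bary j).comp continuous_fst)).measurable)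
      ((continuous_const.mul
        (continuous_const.sub ((cont_bary j).comp continuous_snd))).measurable)

lemma measurableSet_S (r : ℝ) (x0 : ℝ × ℝ) : MeasurableSet {z : ℝ × ℝ | x0 ∈ N r z} := by
  have : {z : ℝ × ℝ | x0 ∈ N r z} = (fun z => (x0, z)) ⁻¹' {q : (ℝ × ℝ) × (ℝ × ℝ) | q.1 ∈ N r q.2} := rfl
  rw [this]
  exact measurable_prodMk_left (measurableSet_W r)

lemma g_nonneg (r : ℝ) (hr : 2 ≤ r) (x0 : ℝ × ℝ) (hx0 : x0 ∈ T) :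
    0 ≤ 1 - ((1 - bary y1 y2 y3 x0 0)^2 + (1 - bary y1 y2 y3 x0 1)^2
      + (1 - bary y1 y2 y3 x0 2)^2) / r^2 := by
  have hb0 : 0 ≤ bary y1 y2 y3 x0 0 := hx0 0
  have hb1 : 0 ≤ bary y1 y2 y3 x0 1 := hx0 1
  have hb2 : 0 ≤ bary y1 y2 y3 x0 2 := hx0 2
  have hbs := bary_sum x0
  have h4 : (4:ℝ) ≤ r^2 := by nlinarith
  have : ((1 - bary y1 y2 y3 x0 0)^2 + (1 - bary y1 y2 y3 x0 1)^2
      + (1 - bary y1 y2 y3 x0 2)^2) / r^2 ≤ 3/4 := by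
    rw [div_le_iff₀ (by positivity)]
    nlinarith [sq_nonneg (1 - bary y1 y2 y3 x0 0), sq_nonneg (1 - bary y1 y2 y3 x0 1),
      sq_nonneg (1 - bary y1 y2 y3 x0 2)]
  linarith

/-- For `r ≥ 2`, `P(X₁ ∈ N^r(X₂) ∩ N^r(X₃)) = (15r⁴ − 45r² + 34)/(15r⁴)`. -/
theorem prob_both_in_gamma (r : ℝ) (hr : r ∈ Set.Ici (2 : ℝ)) :
    ((Measure.pi fun _ : Fin 3 => unif T)
        {x | x 0 ∈ N r (x 1) ∧ x 0 ∈ N r (x 2)}).toReal =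
      (15 * r ^ 4 - 45 * r ^ 2 + 34) / (15 * r ^ 4) := by
  have hr2 : (2:ℝ) ≤ r := hr
  have hr0 : (0:ℝ) < r := by linarith
  have hrne : r ≠ 0 := ne_of_gt hr0
  -- the section measurability
  set A' : Set ((ℝ × ℝ) × (Fin 2 → ℝ × ℝ)) :=
    {p | p.1 ∈ N r (p.2 0) ∧ p.1 ∈ N r (p.2 1)} with hA'def
  have hA'meas : MeasurableSet A' := by
    have : A' = ((fun p : (ℝ × ℝ) × (Fin 2 → ℝ × ℝ) => (p.1, p.2 0)) ⁻¹'
        {q : (ℝ × ℝ) × (ℝ × ℝ) | q.1 ∈ N r q.2}) ∩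
        ((fun p : (ℝ × ℝ) × (Fin 2 → ℝ × ℝ) => (p.1, p.2 1)) ⁻¹'
        {q : (ℝ × ℝ) × (ℝ × ℝ) | q.1 ∈ N r q.2}) := rfl
    rw [this]
    exact (((measurable_fst.prodMk ((measurable_pi_apply 0).comp measurable_snd)))
        (measurableSet_W r)).inter
      (((measurable_fst.prodMk ((measurable_pi_apply 1).comp measurable_snd)))
        (measurableSet_W r))
  -- peel off the first coordinate
  have key1 : (Measure.pi fun _ : Fin 3 => unif T) {x | x 0 ∈ N r (x 1) ∧ x 0 ∈ N r (x 2)}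
      = ((unif T).prod (Measure.pi fun _ : Fin 2 => unif T)) A' := by
    have hp := measurePreserving_piFinSuccAbove (fun _ : Fin 3 => unif T) 0
    have hAeq : {x : Fin 3 → ℝ × ℝ | x 0 ∈ N r (x 1) ∧ x 0 ∈ N r (x 2)}
        = (MeasurableEquiv.piFinSuccAbove (fun _ : Fin 3 => ℝ × ℝ) 0) ⁻¹' A' := by
      ext x
      exact Iff.rfl
    rw [hAeq]
    exact hp.measure_preimage hA'meas.nullMeasurableSet
  -- Fubini in the first coordinate
  have key2 : ((unif T).prod (Measure.pi fun _ : Fin 2 => unif T)) A'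
      = ∫⁻ x0, (unif T {z | x0 ∈ N r z})^2 ∂(unif T) := by
    rw [Measure.prod_apply hA'meas]
    apply lintegral_congr
    intro x0
    have hs : Prod.mk x0 ⁻¹' A' = Set.pi univ (fun _ : Fin 2 => {z | x0 ∈ N r z}) := by
      ext y
      simp only [mem_preimage, hA'def, mem_setOf_eq, Set.mem_pi, mem_univ, true_implies]
      constructor
      · rintro ⟨h0, h1⟩ i
        fin_cases i
        · exact h0
        · exact h1
      · intro h
        exact ⟨h 0, h 1⟩
    rw [hs, Measure.pi_pi, Fin.prod_univ_two, sq]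
  -- pointwise evaluation of the inner probability on T
  have hpoint : ∀ x0 ∈ T, (unif T {z | x0 ∈ N r z})^2 =
      (Dset.indicator (fun y => ENNReal.ofReal
        ((1 - 2*(r^2)⁻¹*(y.1^2 + y.2^2 + y.1*y.2 - y.1 - y.2 + 1))^2))) (L x0) := by
    intro x0 hx0
    have hmemD : L x0 ∈ Dset := by
      rw [T_eq] at hx0
      exact hx0
    rw [indicator_of_mem hmemD]
    have h1 : unif T {z | x0 ∈ N r z} = (volume T)⁻¹ * volume ({z | x0 ∈ N r z} ∩ T) := by
      rw [unif, Measure.smul_apply, Measure.restrict_apply (measurableSet_S r x0), smul_eq_mul]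
    have hgid : Real.sqrt 3 / 4 *
        (1 - ((1 - bary y1 y2 y3 x0 0)^2 + (1 - bary y1 y2 y3 x0 1)^2
          + (1 - bary y1 y2 y3 x0 2)^2) / r^2) =
        Real.sqrt 3 / 4 * (1 - 2*(r^2)⁻¹*((L x0).1^2 + (L x0).2^2
          + (L x0).1*(L x0).2 - (L x0).1 - (L x0).2 + 1)) := by
      rw [bary_zero, bary_one, bary_two, L_app]
      ring
    have hgn := g_nonneg r hr2 x0 hx0
    have hgn2 : 0 ≤ 1 - 2*(r^2)⁻¹*((L x0).1^2 + (L x0).2^2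
        + (L x0).1*(L x0).2 - (L x0).1 - (L x0).2 + 1) := by
      have h3 : (0:ℝ) < Real.sqrt 3 / 4 := by positivity
      nlinarith [hgid, hgn]
    rw [h1, vol_Gamma r hr2 x0 hx0, volume_T, hgid,
      ENNReal.ofReal_mul (by positivity : (0:ℝ) ≤ Real.sqrt 3 / 4), ← mul_assoc,
      ENNReal.inv_mul_cancel (by simp only [ne_eq, ENNReal.ofReal_eq_zero, not_le]; positivity)
        ENNReal.ofReal_ne_top, one_mul, ← ENNReal.ofReal_pow hgn2]
  -- reduce to a volume integral over T
  have key3 : (∫⁻ x0, (unif T {z | x0 ∈ N r z})^2 ∂(unif T))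
      = (volume T)⁻¹ * ∫⁻ x0 in T, (unif T {z | x0 ∈ N r z})^2 ∂volume :=
    lintegral_smul_measure _ _
  have key4 : (∫⁻ x0 in T, (unif T {z | x0 ∈ N r z})^2 ∂volume)
      = ENNReal.ofReal (Real.sqrt 3 / 2) *
        ENNReal.ofReal (1/2 - 3/2*(r^2)⁻¹ + 17/15*((r^2)⁻¹)^2) := by
    rw [setLIntegral_congr_fun measurableSet_T hpoint]
    rw [← lintegral_indicator measurableSet_T]
    have hswap : (∫⁻ x0, T.indicator (fun x0 => (Dset.indicator (fun y => ENNReal.ofReal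
        ((1 - 2*(r^2)⁻¹*(y.1^2 + y.2^2 + y.1*y.2 - y.1 - y.2 + 1))^2))) (L x0)) x0)
        = ∫⁻ x0, (Dset.indicator (fun y => ENNReal.ofReal
        ((1 - 2*(r^2)⁻¹*(y.1^2 + y.2^2 + y.1*y.2 - y.1 - y.2 + 1))^2))) (L x0) := by
      apply lintegral_congr
      intro x0
      by_cases hx0 : x0 ∈ T
      · rw [indicator_of_mem hx0]
      · rw [indicator_of_notMem hx0]
        have : L x0 ∉ Dset := by
          intro hmem
          apply hx0
          rw [T_eq]
          exact hmem
        rw [indicator_of_notMem this]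
    rw [hswap, lintegral_comp_L _ (Measurable.indicator
      (Measurable.ennreal_ofReal (by fun_prop)) measurableSet_Dset),
      lintegral_indicator measurableSet_Dset, lint_Dset ((r^2)⁻¹)]
  -- put everything together
  rw [key1, key2, key3, key4, volume_T]
  have hV : (0:ℝ) ≤ 1/2 - 3/2*(r^2)⁻¹ + 17/15*((r^2)⁻¹)^2 := by
    nlinarith [sq_nonneg ((r^2)⁻¹ - 45/68)]
  rw [ENNReal.toReal_mul, ENNReal.toReal_mul, ENNReal.toReal_inv,
    ENNReal.toReal_ofReal (by positivity : (0:ℝ) ≤ Real.sqrt 3 / 4),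
    ENNReal.toReal_ofReal (by positivity : (0:ℝ) ≤ Real.sqrt 3 / 2),
    ENNReal.toReal_ofReal hV]
  have hs3 := s3_sq
  have hs3ne := s3_ne
  field_simp
  ring_nf
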